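/- For every n ≥ 0, the left-sided half-integral of the Legendre polynomial P_n satisfies (1/√π)·∫_{−1}^{x} P_n(t)/√(x−t) dt = (2√(1+x)/(√π(2n+1)))·(U_n(x) − U_{n−1}(x)) for all x ∈ (−1, 1], where U_{−1} = 0. -/

import Mathlib

open Real intervalIntegral

/-- Ultraspherical (Gegenbauer) polynomials via the three-term recurrence
`(n+1) C_{n+1} = 2(n+λ) x C_n − (n+2λ−1) C_{n−1}`, `C_0 = 1`, `C_{-1} = 0`. -/
noncomputable def Geg (l : ℝ) : ℕ → ℝ → ℝ
  | 0, _ => 1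
  | 1, x => 2 * l * x
  | (n + 2), x =>
      (2 * ((n : ℝ) + 1 + l) * x * Geg l (n + 1) x
        - ((n : ℝ) + 2 * l) * Geg l n x) / ((n : ℝ) + 2)

/-- Ultraspherical polynomials with integer index, zero for negative index. -/
noncomputable def GegZ (l : ℝ) (n : ℤ) (x : ℝ) : ℝ :=
  if 0 ≤ n then Geg l n.toNat x else 0

namespace Stmt7Aux

open Polynomial MeasureTheory Set

/-- Legendre polynomials. -/
noncomputable def L : ℕ → Polynomial ℝ
  | 0 => 1
  | 1 => X
  | (n + 2) => C (((n : ℝ) + 2)⁻¹) *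
      (C (2 * (n : ℝ) + 3) * X * L (n + 1) - C ((n : ℝ) + 1) * L n)

lemma L_rec (n : ℕ) : C ((n : ℝ) + 2) * L (n + 2) =
    C (2 * (n : ℝ) + 3) * X * L (n + 1) - C ((n : ℝ) + 1) * L n := by
  rw [L, ← mul_assoc, ← C_mul, mul_inv_cancel₀ (by positivity), C_1, one_mul]

lemma L_rec_eval (n : ℕ) (x : ℝ) : ((n : ℝ) + 2) * (L (n + 2)).eval x =
    (2 * (n : ℝ) + 3) * x * (L (n + 1)).eval x - ((n : ℝ) + 1) * (L n).eval x := by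
  have := congrArg (eval x) (L_rec n)
  simpa using this

lemma geg_half_eval : ∀ n x, Geg (1/2) n x = (L n).eval x := by
  intro n
  induction n using Nat.strong_induction_on with
  | _ n ih =>
    match n with
    | 0 => intro x; simp [Geg, L]
    | 1 => intro x; simp [Geg, L]
    | (n+2) =>
      intro x
      have h1 := ih (n+1) (by omega) x
      have h0 := ih n (by omega) x
      have hr := congrArg (eval x) (L_rec n)
      simp only [eval_mul, eval_C, eval_sub, eval_X] at hr
      show (2 * ((n : ℝ) + 1 + 1/2) * x * Geg (1/2) (n + 1) x
        - ((n : ℝ) + 2 * (1/2)) * Geg (1/2) n x) / ((n : ℝ) + 2) = _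
      rw [h1, h0]
      field_simp
      linear_combination -hr

lemma geg_one_eval : ∀ (n : ℕ) (x : ℝ),
    Geg 1 n x = (Chebyshev.U ℝ (n : ℤ)).eval x := by
  intro n
  induction n using Nat.strong_induction_on with
  | _ n ih =>
    match n with
    | 0 => intro x; simp [Geg, Chebyshev.U_zero]
    | 1 => intro x; simp [Geg, Chebyshev.U_one]
    | (n+2) =>
      intro x
      have h1 := ih (n+1) (by omega) x
      have h0 := ih n (by omega) x
      have hr := congrArg (eval x) (Chebyshev.U_add_two ℝ (n : ℤ))
      simp only [eval_sub, eval_mul, eval_ofNat, eval_X] at hr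
      show (2 * ((n : ℝ) + 1 + 1) * x * Geg 1 (n + 1) x
        - ((n : ℝ) + 2 * 1) * Geg 1 n x) / ((n : ℝ) + 2) = _
      rw [h1, h0]
      have : ((n : ℤ) + 2) = (((n+2 : ℕ) : ℤ)) := by push_cast; ring
      rw [← this]
      have h2 : ((n:ℤ) + 1) = (((n+1:ℕ)) : ℤ) := by push_cast; ring
      rw [← h2] at h1 ⊢
      rw [hr]
      have hne : ((n:ℝ) + 2) ≠ 0 := by positivity
      field_simp
      ring

lemma L_drec_eval (n : ℕ) (x : ℝ) :
    ((n : ℝ) + 2) * (derivative (L (n + 2))).eval x =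
      (2 * (n : ℝ) + 3) * ((L (n + 1)).eval x + x * (derivative (L (n + 1))).eval x)
        - ((n : ℝ) + 1) * (derivative (L n)).eval x := by
  have h := congrArg derivative (L_rec n)
  have h2 := congrArg (eval x) h
  simp only [derivative_mul, derivative_C, derivative_X, derivative_sub, zero_mul, mul_one,
    add_zero, zero_add, eval_add, eval_mul, eval_sub, eval_C, eval_X] at h2
  linarith [h2]

lemma L_eval_neg_one : ∀ n : ℕ, (L n).eval (-1) = (-1 : ℝ)^n := by
  intro n
  induction n using Nat.strong_induction_on with
  | _ n ih =>
    match n with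
    | 0 => simp [L]
    | 1 => simp [L]
    | (n+2) =>
      have h1 := ih (n+1) (by omega)
      have h0 := ih n (by omega)
      have hr := L_rec_eval n (-1)
      rw [h1, h0] at hr
      have hne : ((n:ℝ) + 2) ≠ 0 := by positivity
      have : ((n:ℝ)+2) * (L (n+2)).eval (-1) = ((n:ℝ)+2) * (-1)^(n+2) := by
        rw [hr]; ring
      exact mul_left_cancel₀ hne this

lemma key : ∀ (n : ℕ) (x : ℝ),
    ((derivative (L (n+1))).eval x
        = x * (derivative (L n)).eval x + ((n:ℝ)+1) * (L n).eval x)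
    ∧ (x * (derivative (L (n+1))).eval x - (derivative (L n)).eval x
        = ((n:ℝ)+1) * (L (n+1)).eval x)
    ∧ ((x^2 - 1) * (derivative (L (n+1))).eval x
        = ((n:ℝ)+1) * (x * (L (n+1)).eval x - (L n).eval x)) := by
  intro n
  induction n with
  | zero =>
    intro x
    refine ⟨?_, ?_, ?_⟩ <;> simp [L] <;> ring
  | succ n ih =>
    intro x
    obtain ⟨hC, hB, hE⟩ := ih x
    have hd := L_drec_eval n x
    have hr := L_rec_eval n x
    have hne : ((n:ℝ) + 2) ≠ 0 := by positivity
    have g1 : (derivative (L (n+2))).eval x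
        = x * (derivative (L (n+1))).eval x + ((n:ℝ)+2) * (L (n+1)).eval x := by
      refine mul_left_cancel₀ hne ?_
      linear_combination hd + ((n:ℝ)+1) * hB
    have hr2 : ((n : ℝ) + 2) * (L (n + 1 + 1)).eval x =
        (2 * (n : ℝ) + 3) * x * (L (n + 1)).eval x - ((n : ℝ) + 1) * (L n).eval x := hr
    refine ⟨by push_cast; linear_combination g1, ?_, ?_⟩
    · push_cast
      linear_combination x * g1 + hE - hr2
    · push_cast
      linear_combination (x^2-1) * g1 + x * hE - x * hr2

/-- The crucial derivative difference identity `L_{n+2}' - L_n' = (2n+3) L_{n+1}`. -/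
lemma L_deriv_diff (n : ℕ) (t : ℝ) :
    (derivative (L (n+2))).eval t - (derivative (L n)).eval t
      = (2*(n:ℝ)+3) * (L (n+1)).eval t := by
  have hC := (key (n+1) t).1
  have hB := (key n t).2.1
  push_cast at hC
  linear_combination hC + hB

lemma integ {x : ℝ} (hx1 : (-1:ℝ) < x) {g : ℝ → ℝ} (hg : Continuous g) :
    IntervalIntegrable (fun t => g t / Real.sqrt (x - t)) volume (-1) x := by
  have h1 : IntervalIntegrable (fun s : ℝ => s ^ (-(1/2) : ℝ)) volume (x+1) 0 :=
    intervalIntegrable_rpow' (by norm_num)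
  have h2 := h1.comp_sub_left x
  rw [show x - (x+1) = -1 by ring, sub_zero] at h2
  have h3 := h2.continuousOn_mul hg.continuousOn
  rw [intervalIntegrable_iff] at h3 ⊢
  refine h3.congr_fun ?_ measurableSet_uIoc
  intro t ht
  rw [uIoc_of_le hx1.le] at ht
  rcases eq_or_lt_of_le ht.2 with h | h
  · simp only [h, sub_self]
    rw [Real.sqrt_zero, Real.zero_rpow (by norm_num), div_zero, mul_zero]
  · have hpos : 0 < x - t := by linarith
    have he : ((x - t) ^ (-(1/2) : ℝ)) = (Real.sqrt (x - t))⁻¹ := by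
      rw [Real.rpow_neg hpos.le, Real.sqrt_eq_rpow]
    show g t * (x - t) ^ (-(1/2) : ℝ) = g t / Real.sqrt (x - t)
    rw [he, div_eq_mul_inv]

lemma star {x : ℝ} (hx1 : (-1:ℝ) < x) (p : Polynomial ℝ) :
    ∫ t in (-1:ℝ)..x, (p.eval t + 2*(t-x)*((derivative p).eval t)) / Real.sqrt (x - t)
      = 2 * Real.sqrt (1 + x) * p.eval (-1) := by
  set F : ℝ → ℝ := fun t => -2 * Real.sqrt (x - t) * p.eval t with hF
  have hcont : ContinuousOn F (Icc (-1) x) := by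
    exact ((continuous_const.mul
      (Real.continuous_sqrt.comp (continuous_const.sub continuous_id))).mul p.continuous).continuousOn
  have hderiv : ∀ t ∈ Ioo (-1:ℝ) x, HasDerivAt F
      ((p.eval t + 2*(t-x)*((derivative p).eval t)) / Real.sqrt (x - t)) t := by
    intro t ht
    have hpos : 0 < x - t := by linarith [ht.2]
    have hne : x - t ≠ 0 := ne_of_gt hpos
    have hs : HasDerivAt (fun t : ℝ => x - t) (-1) t := by
      simpa using (hasDerivAt_id t).const_sub x
    have hsq : HasDerivAt (fun t : ℝ => Real.sqrt (x - t)) (1 / (2 * Real.sqrt (x - t)) * (-1)) t :=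
      (Real.hasDerivAt_sqrt hne).comp t hs
    have hp : HasDerivAt (fun t : ℝ => p.eval t) ((derivative p).eval t) t := p.hasDerivAt t
    have h := ((hsq.const_mul (-2:ℝ)).mul hp)
    refine h.congr_deriv (Eq.symm ?_)
    have hsp : (0:ℝ) < Real.sqrt (x - t) := Real.sqrt_pos.2 hpos
    have hss : Real.sqrt (x - t) * Real.sqrt (x - t) = x - t := Real.mul_self_sqrt hpos.le
    rw [div_eq_iff (ne_of_gt hsp)]
    field_simp
    linear_combination (2 * (derivative p).eval t) * hss
  have hint : IntervalIntegrable
      (fun t => (p.eval t + 2*(t-x)*((derivative p).eval t)) / Real.sqrt (x - t))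
      volume (-1) x := by
    refine integ hx1 ?_
    exact p.continuous.add ((continuous_const.mul ((continuous_id.sub continuous_const))).mul
      (derivative p).continuous)
  have := integral_eq_sub_of_hasDerivAt_of_le hx1.le hcont hderiv hint
  rw [this, hF]
  simp only
  rw [sub_self, Real.sqrt_zero]
  have : x - (-1) = 1 + x := by ring
  rw [this]
  ring

lemma Icomb {x : ℝ} (hx1 : (-1:ℝ) < x) (a b c : ℝ) (p q r : Polynomial ℝ) :
    ∫ t in (-1:ℝ)..x, (a * p.eval t + b * q.eval t + c * r.eval t) / Real.sqrt (x - t)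
      = a * (∫ t in (-1:ℝ)..x, p.eval t / Real.sqrt (x - t))
        + b * (∫ t in (-1:ℝ)..x, q.eval t / Real.sqrt (x - t))
        + c * (∫ t in (-1:ℝ)..x, r.eval t / Real.sqrt (x - t)) := by
  have hp := integ hx1 p.continuous
  have hq := integ hx1 q.continuous
  have hr := integ hx1 r.continuous
  rw [show (fun t => (a * p.eval t + b * q.eval t + c * r.eval t) / Real.sqrt (x - t))
      = (fun t => a * (p.eval t / Real.sqrt (x - t)) + (b * (q.eval t / Real.sqrt (x - t))
          + c * (r.eval t / Real.sqrt (x - t)))) from funext fun t => by ring]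
  rw [intervalIntegral.integral_add (hp.const_mul a) ((hq.const_mul b).add (hr.const_mul c)),
    intervalIntegral.integral_add (hq.const_mul b) (hr.const_mul c),
    intervalIntegral.integral_const_mul, intervalIntegral.integral_const_mul,
    intervalIntegral.integral_const_mul]
  ring

/-- The three-term recurrence for the half-integrals of Legendre polynomials. -/
lemma Frec {x : ℝ} (hx1 : (-1:ℝ) < x) (n : ℕ) :
    (2*(n:ℝ)+5) * (∫ t in (-1:ℝ)..x, (L (n+2)).eval t / Real.sqrt (x - t))
      + (2*(n:ℝ)+1) * (∫ t in (-1:ℝ)..x, (L n).eval t / Real.sqrt (x - t))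
      + (-(2*(2*(n:ℝ)+3)*x)) * (∫ t in (-1:ℝ)..x, (L (n+1)).eval t / Real.sqrt (x - t))
      = 0 := by
  have hstar := star hx1 (L (n+2) - L n)
  have heval : (L (n+2) - L n).eval (-1) = 0 := by
    rw [eval_sub, L_eval_neg_one, L_eval_neg_one, pow_succ, pow_succ]
    ring
  rw [heval, mul_zero] at hstar
  have hfun : (fun t => ((L (n+2) - L n).eval t
        + 2*(t-x)*((derivative (L (n+2) - L n)).eval t)) / Real.sqrt (x - t))
      = (fun t => ((2*(n:ℝ)+5) * (L (n+2)).eval t + (2*(n:ℝ)+1) * (L n).eval t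
          + (-(2*(2*(n:ℝ)+3)*x)) * (L (n+1)).eval t) / Real.sqrt (x - t)) := by
    funext t
    congr 1
    rw [derivative_sub, eval_sub, eval_sub]
    have hd := L_deriv_diff n t
    have hrec := L_rec_eval n t
    linear_combination (2*(t-x)) * hd - 2 * hrec
  rw [hfun, Icomb hx1] at hstar
  linarith [hstar]

lemma Fbase0 {x : ℝ} (hx1 : (-1:ℝ) < x) :
    (∫ t in (-1:ℝ)..x, (L 0).eval t / Real.sqrt (x - t)) = 2 * Real.sqrt (1 + x) := by
  have hstar := star hx1 (L 0)
  have h1 : derivative (L 0) = 0 := by simp [L]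
  rw [h1] at hstar
  simp only [eval_zero, mul_zero, add_zero] at hstar
  rw [hstar]
  simp [L]

lemma Fbase1 {x : ℝ} (hx1 : (-1:ℝ) < x) :
    (∫ t in (-1:ℝ)..x, (L 1).eval t / Real.sqrt (x - t))
      = 2 * Real.sqrt (1 + x) * (2*x - 1) / 3 := by
  have hstar := star hx1 (L 1)
  have h1 : derivative (L 1) = 1 := by simp [L]
  rw [h1] at hstar
  have hfun : (fun t => ((L 1).eval t + 2*(t-x)*((1 : Polynomial ℝ).eval t)) / Real.sqrt (x - t))
      = (fun t => ((3:ℝ) * (L 1).eval t + (-(2*x)) * (L 0).eval t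
          + 0 * (L 0).eval t) / Real.sqrt (x - t)) := by
    funext t
    congr 1
    simp [L]
    ring
  rw [hfun, Icomb hx1, Fbase0 hx1] at hstar
  have : (L 1).eval (-1) = -1 := by simp [L]
  rw [this] at hstar
  linarith [hstar]

/-- Main induction: half-integral of Legendre = Chebyshev expression. -/
lemma main {x : ℝ} (hx1 : (-1:ℝ) < x) : ∀ n : ℕ,
    (∫ t in (-1:ℝ)..x, (L n).eval t / Real.sqrt (x - t))
      = 2 * Real.sqrt (1 + x) * ((Chebyshev.U ℝ (n:ℤ)).eval x
          - (Chebyshev.U ℝ ((n:ℤ)-1)).eval x) / (2*(n:ℝ)+1) := by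
  have urec : ∀ k : ℤ, (Chebyshev.U ℝ (k+2)).eval x
      = 2*x*(Chebyshev.U ℝ (k+1)).eval x - (Chebyshev.U ℝ k).eval x := by
    intro k
    have := congrArg (eval x) (Chebyshev.U_add_two ℝ k)
    simpa using this
  have key2 : ∀ n : ℕ,
      ((∫ t in (-1:ℝ)..x, (L n).eval t / Real.sqrt (x - t))
        = 2 * Real.sqrt (1 + x) * ((Chebyshev.U ℝ (n:ℤ)).eval x
            - (Chebyshev.U ℝ ((n:ℤ)-1)).eval x) / (2*(n:ℝ)+1))
      ∧ ((∫ t in (-1:ℝ)..x, (L (n+1)).eval t / Real.sqrt (x - t))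
        = 2 * Real.sqrt (1 + x) * ((Chebyshev.U ℝ ((n+1:ℕ):ℤ)).eval x
            - (Chebyshev.U ℝ (((n+1:ℕ):ℤ)-1)).eval x) / (2*((n+1:ℕ):ℝ)+1)) := by
    intro n
    induction n with
    | zero =>
      constructor
      · rw [Fbase0 hx1]
        rw [show (((0:ℕ):ℤ)) = 0 from rfl, show ((0:ℤ)-1) = -1 by norm_num,
          Chebyshev.U_zero, Chebyshev.U_neg_one]
        norm_num
      · rw [Fbase1 hx1]
        rw [show (((0+1:ℕ):ℤ)) = 1 by norm_num, show ((1:ℤ)-1) = 0 by norm_num,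
          Chebyshev.U_one, Chebyshev.U_zero]
        push_cast
        simp only [eval_mul, eval_ofNat, eval_X, eval_one]
        ring
    | succ n ih =>
      obtain ⟨ih0, ih1⟩ := ih
      refine ⟨ih1, ?_⟩
      push_cast at ih1
      rw [show ((n:ℤ)+1-1) = (n:ℤ) by ring] at ih1
      have hF := Frec hx1 n
      rw [ih0, ih1] at hF
      have hu2 := urec (n:ℤ)
      have hu1 := urec ((n:ℤ)-1)
      rw [show ((n:ℤ)-1+2) = (n:ℤ)+1 by ring, show ((n:ℤ)-1+1) = (n:ℤ) by ring] at hu1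
      have h1 : (2*(n:ℝ)+1) ≠ 0 := by positivity
      have h3 : (2*(n:ℝ)+3) ≠ 0 := by positivity
      have e1 : ∀ A : ℝ, (2*(n:ℝ)+1) * (A/(2*(n:ℝ)+1)) = A := fun A => by field_simp
      have e3 : ∀ A : ℝ, (-(2*(2*(n:ℝ)+3)*x)) * (A/(2*((n:ℝ)+1)+1)) = -2*x*A := fun A => by
        have : (2*((n:ℝ)+1)+1) = 2*(n:ℝ)+3 := by ring
        rw [this]; field_simp
      rw [e1, e3] at hF
      show (∫ t in (-1:ℝ)..x, (L (n+2)).eval t / Real.sqrt (x - t)) = _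
      push_cast
      rw [show ((n:ℤ)+1+1-1) = (n:ℤ)+1 by ring, show ((n:ℤ)+1+1) = (n:ℤ)+2 by ring,
        hu2, eq_div_iff (by positivity : (2*((n:ℝ)+1+1)+1) ≠ 0)]
      linear_combination hF + (2*Real.sqrt (1+x)) * hu1
  intro n
  exact (key2 n).1

end Stmt7Aux

open Stmt7Aux Polynomial in
theorem stmt7 (n : ℤ) (hn : 0 ≤ n) (x : ℝ) (hx : x ∈ Set.Ioc (-1 : ℝ) 1) :
    (1 / Real.sqrt π) * ∫ t in (-1 : ℝ)..x, GegZ (1/2) n t / Real.sqrt (x - t) =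
      2 * Real.sqrt (1 + x) / (Real.sqrt π * (2 * (n : ℝ) + 1))
        * (GegZ 1 n x - GegZ 1 (n - 1) x) := by
  obtain ⟨hx1, hx2⟩ := hx
  set m := n.toNat with hm
  have hnm : (m : ℤ) = n := Int.toNat_of_nonneg hn
  have hint : (∫ t in (-1 : ℝ)..x, GegZ (1/2) n t / Real.sqrt (x - t))
      = ∫ t in (-1 : ℝ)..x, (L m).eval t / Real.sqrt (x - t) := by
    congr 1
    funext t
    rw [GegZ, if_pos hn, geg_half_eval]
  have hmain := main hx1 m
  have hU1 : GegZ 1 n x = (Chebyshev.U ℝ (m:ℤ)).eval x := by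
    rw [GegZ, if_pos hn, geg_one_eval]
  have hU2 : GegZ 1 (n-1) x = (Chebyshev.U ℝ ((m:ℤ)-1)).eval x := by
    rcases eq_or_lt_of_le hn with h0 | h0
    · rw [GegZ, if_neg (by omega)]
      have : (m:ℤ) - 1 = -1 := by omega
      rw [this, Chebyshev.U_neg_one, eval_zero]
    · rw [GegZ, if_pos (by omega), geg_one_eval]
      have : (((n-1).toNat : ℤ)) = (m:ℤ) - 1 := by omega
      rw [this]
  have hcast : ((m:ℝ)) = (n:ℝ) := by
    rw [← hnm]; push_cast; ring
  rw [hint, hmain, hU1, hU2, ← hcast]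
  have hpi : Real.sqrt π ≠ 0 := by
    refine ne_of_gt (Real.sqrt_pos.2 Real.pi_pos)
  have h1 : (2*(m:ℝ)+1) ≠ 0 := by positivity
  field_simp
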